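/- Let X, Y be distinct node sets and S a node set in a DAG G such that every d-connecting path between X and Y given S exists, and let p be a shortest d-connecting path between X and Y given S. Then p contains no shielded collider: there do not exist consecutive nodes A, B, C on p with A→B←C in G and A, C adjacent in G. -/

import Mathlib

/-! ## Basic notions for directed graphs (DAGs) given by an edge relation `E`. -/

/-- A directed graph (edge relation `E`) is acyclic: no directed cycles. -/
def Acyclic {V : Type*} (E : V → V → Prop) : Prop := ∀ x, ¬ Relation.TransGen E x x

/-- Two nodes are adjacent if there is an edge between them in either direction. -/
def adjD {V : Type*} (E : V → V → Prop) (a b : V) : Prop := E a b ∨ E b a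

/-- `p` is a path (in the skeleton) from `X` to `Y`: consecutive nodes are adjacent and
nodes are pairwise distinct. -/
def IsPath {V : Type*} (E : V → V → Prop) (p : List V) (X Y : V) : Prop :=
  p.head? = some X ∧ p.getLast? = some Y ∧ p.Chain' (adjD E) ∧ p.Nodup

/-- A path is d-connecting (open) given `S` if every collider on it is an ancestor
of some node of `S` and no non-collider on it lies in `S`. -/
def dConnecting {V : Type*} (E : V → V → Prop) (S : Set V) (p : List V) : Prop :=
  ∀ (i : ℕ) a b c, p[i]? = some a → p[i+1]? = some b → p[i+2]? = some c →
    ((E a b ∧ E c b) → ∃ s ∈ S, Relation.ReflTransGen E b s) ∧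
    (¬ (E a b ∧ E c b) → b ∉ S)

/-- `X` and `Y` are d-separated by `S` if every path between them is blocked by `S`. -/
def dSeparated {V : Type*} (E : V → V → Prop) (S : Set V) (X Y : V) : Prop :=
  ∀ p : List V, IsPath E p X Y → ¬ dConnecting E S p

/-- A v-structure `a → b ← c` with `a`, `c` non-adjacent. -/
def vStructD {V : Type*} (E : V → V → Prop) (a b c : V) : Prop :=
  E a b ∧ E c b ∧ a ≠ c ∧ ¬ adjD E a c

/-! ## Partially directed graphs (PDAGs / MPDAGs). -/

/-- A partially directed graph: directed edges `dir` and undirected edges `undir`. -/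
structure PDAG (V : Type*) where
  dir : V → V → Prop
  undir : V → V → Prop
  undir_symm : ∀ a b, undir a b → undir b a
  dir_asymm : ∀ a b, dir a b → ¬ dir b a
  disj : ∀ a b, undir a b → ¬ dir a b

namespace PDAG

variable {V : Type*} (G : PDAG V)

/-- Adjacency in a partially directed graph. -/
def adj (a b : V) : Prop := G.dir a b ∨ G.dir b a ∨ G.undir a b

/-- A v-structure `a → b ← c` in a PDAG, with `a, c` non-adjacent. -/
def vStruct (a b c : V) : Prop := G.dir a b ∧ G.dir c b ∧ a ≠ c ∧ ¬ G.adj a c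

/-- Parents of `X`. -/
def pa (X : V) : Set V := {z | G.dir z X}

/-- Children of `X`. -/
def ch (X : V) : Set V := {z | G.dir X z}

/-- Siblings (undirected neighbours) of `X`. -/
def sib (X : V) : Set V := {z | G.undir X z}

/-- A DAG `E` is represented by the (M)PDAG `G` (i.e. `E ∈ [G]`): it is acyclic,
has the same skeleton and the same v-structures as `G`, and preserves every
directed edge of `G`. -/
def Represents (E : V → V → Prop) : Prop :=
  Acyclic E ∧ (∀ a b, adjD E a b ↔ G.adj a b) ∧
  (∀ a b, G.dir a b → E a b) ∧
  (∀ a b c, vStructD E a b c ↔ G.vStruct a b c)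

/-- `G` is an MPDAG: its represented class is non-empty, an edge is directed in
`G` iff it has that orientation in all DAGs of the class, and every undirected
edge takes both orientations across the class. -/
def IsMPDAG : Prop :=
  (∃ E, G.Represents E) ∧
  (∀ a b, G.dir a b ↔ (G.adj a b ∧ ∀ E, G.Represents E → E a b)) ∧
  (∀ a b, G.undir a b → ∃ E, G.Represents E ∧ E a b)

/-- Induced sub-PDAG on a vertex set `W`. -/
def induce (W : Set V) : PDAG V where
  dir a b := a ∈ W ∧ b ∈ W ∧ G.dir a b
  undir a b := a ∈ W ∧ b ∈ W ∧ G.undir a b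
  undir_symm a b h := ⟨h.2.1, h.1, G.undir_symm a b h.2.2⟩
  dir_asymm a b h hb := G.dir_asymm a b h.2.2 hb.2.2
  disj a b h hd := G.disj a b h.2.2 hd.2.2

end PDAG

/-- A path in a PDAG: consecutive nodes adjacent, pairwise distinct nodes. -/
def IsPDAGPath {V : Type*} (G : PDAG V) (p : List V) (X Y : V) : Prop :=
  p.head? = some X ∧ p.getLast? = some Y ∧ p.Chain' G.adj ∧ p.Nodup

/-- A path is b-possibly causal: no edge `V_j → V_i` in `G` for `i < j` along it. -/
def bPossiblyCausal {V : Type*} (G : PDAG V) (p : List V) : Prop :=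
  ∀ (i j : ℕ) a b, i < j → p[i]? = some a → p[j]? = some b → ¬ G.dir b a

/-- A path is chordless: non-consecutive nodes are non-adjacent. -/
def Chordless {V : Type*} (G : PDAG V) (p : List V) : Prop :=
  ∀ (i j : ℕ) a b, i + 1 < j → p[i]? = some a → p[j]? = some b → ¬ G.adj a b

/-- Critical set of `X` with respect to `Y` in `G`: the adjacent vertices of `X`
lying on some chordless b-possibly causal path from `X` to `Y`. -/
def criticalSet {V : Type*} (G : PDAG V) (X Y : V) : Set V :=
  {c | ∃ p : List V, IsPDAGPath G p X Y ∧ bPossiblyCausal G p ∧ Chordless G p ∧ p[1]? = some c}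

/-- A DAG extension of `G`: acyclic, same skeleton, all directed edges of `G`
kept, and no v-structures beyond those of `G`. -/
def ExtendsNoNewV {V : Type*} (G : PDAG V) (E : V → V → Prop) : Prop :=
  Acyclic E ∧ (∀ a b, adjD E a b ↔ G.adj a b) ∧
  (∀ a b, G.dir a b → E a b) ∧
  (∀ a b c, vStructD E a b c → G.vStruct a b c)

/-- An acyclic orientation of `G` extending its directed edges. -/
def ExtendsDir {V : Type*} (G : PDAG V) (E : V → V → Prop) : Prop :=
  Acyclic E ∧ (∀ a b, adjD E a b ↔ G.adj a b) ∧ (∀ a b, G.dir a b → E a b)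

/-- `W` is (the vertex set of) a B-component of `G`: an equivalence class of the
undirected-connectivity relation. -/
def IsBComponent {V : Type*} (G : PDAG V) (W : Set V) : Prop :=
  ∃ a, W = {b | Relation.ReflTransGen G.undir a b}

/-- Every non-endpoint node of `p` is of definite status in `M`: a definite
collider or a definite non-collider. -/
def DefiniteStatus {V : Type*} (M : PDAG V) (p : List V) : Prop :=
  ∀ (i : ℕ) a b c, p[i]? = some a → p[i+1]? = some b → p[i+2]? = some c →
    (M.dir a b ∧ M.dir c b) ∨ M.dir b a ∨ M.dir b c ∨
    (M.undir a b ∧ M.undir b c ∧ ¬ M.adj a c)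


private lemma asymm_of_acyclic {V : Type*} {E : V → V → Prop} (h : Acyclic E) {a b : V}
    (hab : E a b) : ¬ E b a := fun hba =>
  h a (Relation.TransGen.head hab (Relation.TransGen.single hba))

private lemma chain'_iff_getElem?' {α : Type*} {R : α → α → Prop} {l : List α} :
    l.Chain' R ↔ ∀ i a b, l[i]? = some a → l[i+1]? = some b → R a b := by
  rw [show l.Chain' R ↔ l.IsChain R from Iff.rfl, List.isChain_iff_getElem]
  constructor
  · intro h i a b ha hb
    rw [List.getElem?_eq_some_iff] at ha hb
    obtain ⟨hia, ha⟩ := ha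
    obtain ⟨hib, hb⟩ := hb
    have := h i (by omega)
    simpa [List.get_eq_getElem, ha, hb] using this
  · intro h i hi
    exact h i _ _ (by rw [List.getElem?_eq_some_iff]; exact ⟨by omega, rfl⟩)
      (by rw [List.getElem?_eq_some_iff]; exact ⟨by omega, rfl⟩)

/-- a shortest d-connecting path between node sets `XS` and `YS` given `S`
contains no shielded collider. -/
theorem stmt1 {V : Type*} (E : V → V → Prop) (hdag : Acyclic E)
    (XS YS S : Set V)
    (hXY : Disjoint XS YS) (hXS : Disjoint XS S) (hYS : Disjoint YS S)
    (p : List V) (X Y : V) (hX : X ∈ XS) (hY : Y ∈ YS)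
    (hp : IsPath E p X Y) (hconn : dConnecting E S p)
    (hshort : ∀ (q : List V) (X' Y' : V), X' ∈ XS → Y' ∈ YS →
      IsPath E q X' Y' → dConnecting E S q → p.length ≤ q.length) :
    ¬ ∃ (i : ℕ) (a b c : V), p[i]? = some a ∧ p[i+1]? = some b ∧ p[i+2]? = some c ∧
      E a b ∧ E c b ∧ adjD E a c := by
  rintro ⟨i, a, b, c, ha, hb, hc, hEab, hEcb, hadj⟩
  have hlen : i + 2 < p.length := by
    rw [List.getElem?_eq_some_iff] at hc; exact hc.1
  set q := p.take (i+1) ++ p.drop (i+2) with hqdef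
  have htl : (p.take (i+1)).length = i + 1 := by
    rw [List.length_take]; omega
  have hq_lt : ∀ j, j ≤ i → q[j]? = p[j]? := by
    intro j hj
    rw [hqdef, List.getElem?_append_left (by omega : j < (p.take (i+1)).length),
      List.getElem?_take, if_pos (by omega)]
  have hq_ge : ∀ j, i + 1 ≤ j → q[j]? = p[j+1]? := by
    intro j hj
    rw [hqdef, List.getElem?_append_right (by omega : (p.take (i+1)).length ≤ j), htl,
      List.getElem?_drop]
    have : i + 2 + (j - (i + 1)) = j + 1 := by omega
    rw [this]
  have hqlen : q.length = p.length - 1 := by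
    rw [hqdef, List.length_append, htl, List.length_drop]; omega
  obtain ⟨hhead, hlast, hchain, hnodup⟩ := hp
  have hchain' := chain'_iff_getElem?'.mp hchain
  have hnba : ¬ E b a := asymm_of_acyclic hdag hEab
  have hnbc : ¬ E b c := asymm_of_acyclic hdag hEcb
  have hbdesc : ∃ s ∈ S, Relation.ReflTransGen E b s :=
    (hconn i a b c ha hb hc).1 ⟨hEab, hEcb⟩
  have hqpath : IsPath E q X Y := by
    refine ⟨?_, ?_, ?_, ?_⟩
    · rw [List.head?_eq_getElem?, hq_lt 0 (by omega), ← List.head?_eq_getElem?]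
      exact hhead
    · rw [List.getLast?_eq_getElem?, hqlen]
      have h1 : p.length - 1 - 1 = p.length - 2 := by omega
      rw [h1, hq_ge (p.length - 2) (by omega)]
      have h2 : p.length - 2 + 1 = p.length - 1 := by omega
      rw [h2, ← List.getLast?_eq_getElem?]
      exact hlast
    · rw [chain'_iff_getElem?']
      intro j x y hx hy
      rcases Nat.lt_or_ge j i with hj | hj
      · rw [hq_lt j (by omega)] at hx
        rw [hq_lt (j+1) (by omega)] at hy
        exact hchain' j x y hx hy
      · rcases Nat.eq_or_lt_of_le hj with hj' | hj'
        · have hji : j = i := by omega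
          rw [hq_lt j (by omega), hji] at hx
          rw [hq_ge (j+1) (by omega), show j + 1 + 1 = i + 2 by omega] at hy
          have hx' : x = a := (Option.some.inj (ha.symm.trans hx)).symm
          have hy' : y = c := (Option.some.inj (hc.symm.trans hy)).symm
          subst hx' hy'
          exact hadj
        · rw [hq_ge j (by omega)] at hx
          rw [hq_ge (j+1) (by omega)] at hy
          exact hchain' (j+1) x y hx hy
    · refine hnodup.sublist ?_
      conv_rhs => rw [← List.take_append_drop (i+1) p]
      exact (List.drop_drop (i := 1) (j := i+1) (l := p) ▸ List.drop_sublist 1 (p.drop (i+1))).append_left _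
  have hqconn : dConnecting E S q := by
    intro j x y z hx hy hz
    rcases Nat.lt_or_ge j i with hj | hj
    · rcases Nat.lt_or_ge (j+1) i with hj1 | hj1
      · rw [hq_lt j (by omega)] at hx
        rw [hq_lt (j+1) (by omega)] at hy
        rw [hq_lt (j+2) (by omega)] at hz
        exact hconn j x y z hx hy hz
      · have hji : j + 1 = i := by omega
        rw [hq_lt j (by omega)] at hx
        rw [hq_lt (j+1) (by omega), hji] at hy
        rw [hq_ge (j+2) (by omega), show j + 2 + 1 = i + 2 by omega] at hz
        have hy' : y = a := (Option.some.inj (ha.symm.trans hy)).symm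
        have hz' : z = c := (Option.some.inj (hc.symm.trans hz)).symm
        subst hy' hz'
        constructor
        · rintro ⟨_, _⟩
          obtain ⟨s, hs, hbs⟩ := hbdesc
          exact ⟨s, hs, Relation.ReflTransGen.head hEab hbs⟩
        · intro _
          refine (hconn j x y b hx (by rw [hji]; exact ha) ?_).2 (fun h => hnba h.2)
          rw [show j + 2 = i + 1 by omega]; exact hb
    · rcases Nat.eq_or_lt_of_le hj with hj' | hj'
      · have hji : j = i := by omega
        rw [hq_lt j (by omega), hji] at hx
        rw [hq_ge (j+1) (by omega), show j + 1 + 1 = i + 2 by omega] at hy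
        rw [hq_ge (j+2) (by omega), show j + 2 + 1 = i + 3 by omega] at hz
        have hx' : x = a := (Option.some.inj (ha.symm.trans hx)).symm
        have hy' : y = c := (Option.some.inj (hc.symm.trans hy)).symm
        subst hx' hy'
        constructor
        · rintro ⟨_, _⟩
          obtain ⟨s, hs, hbs⟩ := hbdesc
          exact ⟨s, hs, Relation.ReflTransGen.head hEcb hbs⟩
        · intro _
          refine (hconn (i+1) b y z hb hy ?_).2 (fun h => hnbc h.1)
          rw [show i + 1 + 2 = i + 3 by omega]; exact hz
      · rw [hq_ge j (by omega)] at hx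
        rw [hq_ge (j+1) (by omega)] at hy
        rw [hq_ge (j+2) (by omega)] at hz
        exact hconn (j+1) x y z hx hy hz
  have hle := hshort q X Y hX hY hqpath hqconn
  rw [hqlen] at hle
  omega
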